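/- Let n ≥ 1 and 0 ≤ m ≤ n be integers, τ > 0 a real number, and a₀,…,a_{n−1}, b₀,…,b_m real coefficients such that at least one b_k is nonzero. Then the quasipolynomial Δ(s) = s^n + Σ_{k=0}^{n−1} a_k s^k + e^{−sτ} Σ_{k=0}^{m} b_k s^k has infinitely many roots in the complex plane. -/

import Mathlib

open Finset Complex Filter

noncomputable def qpoly (c : ℕ → ℂ) (D : ℕ) (s : ℂ) : ℂ := ∑ k ∈ Finset.range (D+1), c k * s ^ k
noncomputable def qdpoly (c : ℕ → ℂ) (D : ℕ) (s : ℂ) : ℂ :=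
  ∑ k ∈ Finset.range (D+1), c k * (k * s ^ (k-1))

lemma hasDerivAt_qpoly (c : ℕ → ℂ) (D : ℕ) (s : ℂ) :
    HasDerivAt (fun z => qpoly c D z) (qdpoly c D s) s :=
  HasDerivAt.fun_sum fun k _ => (hasDerivAt_pow k s).const_mul (c k)

set_option maxHeartbeats 1000000 in
lemma qpoly_tail (c : ℕ → ℂ) (D : ℕ) (s : ℂ) (hs : 1 ≤ ‖s‖) :
    ‖qpoly c D s - c D * s ^ D‖ * ‖s‖ ≤ (∑ k ∈ range D, ‖c k‖) * ‖s‖ ^ D := by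
  have h1 : qpoly c D s - c D * s ^ D = ∑ k ∈ range D, c k * s ^ k := by
    rw [qpoly, Finset.sum_range_succ]; ring
  rw [h1]
  calc ‖∑ k ∈ range D, c k * s ^ k‖ * ‖s‖ ≤ (∑ k ∈ range D, ‖c k * s ^ k‖) * ‖s‖ := by
        apply mul_le_mul_of_nonneg_right (norm_sum_le _ _) (norm_nonneg s)
    _ = ∑ k ∈ range D, ‖c k‖ * ‖s‖ ^ (k+1) := by
        rw [Finset.sum_mul]; congr 1; ext k; rw [norm_mul, norm_pow]; ring
    _ ≤ ∑ k ∈ range D, ‖c k‖ * ‖s‖ ^ D := by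
        apply Finset.sum_le_sum; intro k hk
        exact mul_le_mul_of_nonneg_left (pow_le_pow_right₀ hs (Finset.mem_range.1 hk))
          (norm_nonneg _)
    _ = (∑ k ∈ range D, ‖c k‖) * ‖s‖ ^ D := by rw [Finset.sum_mul]

lemma qdpoly_bound (c : ℕ → ℂ) (D : ℕ) (s : ℂ) (hs : 1 ≤ ‖s‖) :
    ‖qdpoly c D s‖ * ‖s‖ ≤ (∑ k ∈ range (D+1), (k:ℝ) * ‖c k‖) * ‖s‖ ^ D := by
  rw [qdpoly]
  calc ‖∑ k ∈ range (D+1), c k * (k * s ^ (k-1))‖ * ‖s‖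
      ≤ (∑ k ∈ range (D+1), ‖c k * (k * s ^ (k-1))‖) * ‖s‖ := by
        apply mul_le_mul_of_nonneg_right (norm_sum_le _ _) (norm_nonneg s)
    _ = ∑ k ∈ range (D+1), ‖c k‖ * ((k:ℝ) * ‖s‖ ^ (k-1)) * ‖s‖ := by
        rw [Finset.sum_mul]; congr 1; ext k
        rw [norm_mul, norm_mul, norm_pow, Complex.norm_natCast]
    _ ≤ ∑ k ∈ range (D+1), (k:ℝ) * ‖c k‖ * ‖s‖ ^ D := by
        apply Finset.sum_le_sum; intro k hk
        rcases Nat.eq_zero_or_pos k with rfl | hk1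
        · simp
        · have h2 : ‖s‖ ^ (k-1) * ‖s‖ = ‖s‖ ^ k := by
            rw [← pow_succ]; congr 1; omega
          have hkD : k ≤ D := by have := Finset.mem_range.1 hk; omega
          calc ‖c k‖ * ((k:ℝ) * ‖s‖ ^ (k-1)) * ‖s‖ = (k:ℝ) * ‖c k‖ * (‖s‖ ^ (k-1) * ‖s‖) := by
                ring
            _ = (k:ℝ) * ‖c k‖ * ‖s‖ ^ k := by rw [h2]
            _ ≤ (k:ℝ) * ‖c k‖ * ‖s‖ ^ D := by
                apply mul_le_mul_of_nonneg_left (pow_le_pow_right₀ hs hkD)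
                positivity
    _ = (∑ k ∈ range (D+1), (k:ℝ) * ‖c k‖) * ‖s‖ ^ D := by rw [Finset.sum_mul]

lemma pow_sub_pow_bound (x y : ℂ) (e : ℕ) (M : ℝ) (hx : ‖x‖ ≤ M) (hy : ‖y‖ ≤ M) :
    ‖x ^ e - y ^ e‖ ≤ (e:ℝ) * M ^ (e-1) * ‖x - y‖ := by
  have hM : 0 ≤ M := le_trans (norm_nonneg x) hx
  rw [← geom_sum₂_mul x y e, norm_mul]
  apply mul_le_mul_of_nonneg_right _ (norm_nonneg _)
  calc ‖∑ i ∈ range e, x ^ i * y ^ (e-1-i)‖ ≤ ∑ i ∈ range e, ‖x ^ i * y ^ (e-1-i)‖ :=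
        norm_sum_le _ _
    _ ≤ ∑ _i ∈ range e, M ^ (e-1) := by
        apply Finset.sum_le_sum; intro i hi
        rw [norm_mul, norm_pow, norm_pow]
        calc ‖x‖ ^ i * ‖y‖ ^ (e-1-i) ≤ M ^ i * M ^ (e-1-i) := by
              apply mul_le_mul (pow_le_pow_left₀ (norm_nonneg _) hx i)
                (pow_le_pow_left₀ (norm_nonneg _) hy _) (by positivity) (by positivity)
          _ = M ^ (e-1) := by
              rw [← pow_add]; congr 1; have := Finset.mem_range.1 hi; omega
    _ = (e:ℝ) * M ^ (e-1) := by rw [Finset.sum_const, card_range, nsmul_eq_mul]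

set_option maxHeartbeats 1000000 in
lemma exists_root_shift (A B : ℕ → ℂ) (n d : ℕ) (hn : 1 ≤ n) (hdn : d ≤ n)
    (hA : A n = 1) (hB : B d ≠ 0) (τ : ℝ) (hτ : 0 < τ) :
    ∃ T : ℝ, ∀ t : ℝ, T ≤ t → ∃ s : ℂ, t/2 ≤ ‖s‖ ∧
      qpoly A n s + Complex.exp (-(s - I*t)*τ) * qpoly B d s = 0 := by
  classical
  obtain ⟨β, hβdef⟩ : ∃ x : ℝ, x = ‖B d‖ := ⟨_, rfl⟩
  have hβ : 0 < β := hβdef ▸ norm_pos_iff.2 hB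
  obtain ⟨e, hedef⟩ : ∃ x : ℕ, x = n - d := ⟨_, rfl⟩
  have hed : e + d = n := by omega
  obtain ⟨c₀, hc₀def⟩ : ∃ x : ℂ, x = -(I ^ e) / B d := ⟨_, rfl⟩
  have hc₀ : c₀ ≠ 0 := by
    rw [hc₀def]
    apply div_ne_zero _ hB
    simp [pow_ne_zero, I_ne_zero]
  obtain ⟨θ, hθdef⟩ : ∃ x : ℝ, x = c₀.arg := ⟨_, rfl⟩
  obtain ⟨E, hEdef⟩ : ∃ x : ℂ, x = Complex.exp (-(θ:ℂ) * I) := ⟨_, rfl⟩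
  have hEnorm : ‖E‖ = 1 := by
    rw [hEdef]
    have : (-(θ:ℂ)) = ((-θ : ℝ) : ℂ) := by push_cast; ring
    rw [this, Complex.norm_exp_ofReal_mul_I]
  have hc₀abs : ‖c₀‖ = 1/β := by
    rw [hc₀def, norm_div, hβdef]
    simp
  have hEc : E * c₀ = ((1/β : ℝ) : ℂ) := by
    calc E * c₀ = E * (↑(‖c₀‖) * Complex.exp (↑θ * I)) := by
          rw [hθdef, Complex.norm_mul_exp_arg_mul_I]
      _ = ↑(‖c₀‖) * (E * Complex.exp (↑θ * I)) := by ring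
      _ = ↑(‖c₀‖) := by
          rw [hEdef, ← Complex.exp_add]
          have : -(θ:ℂ) * I + ↑θ * I = 0 := by ring
          rw [this, Complex.exp_zero, mul_one]
      _ = ((1/β : ℝ) : ℂ) := by rw [hc₀abs]
  have hEI : E * I ^ e = -(((1/β : ℝ)):ℂ) * B d := by
    have hIe : (I:ℂ) ^ e = -(c₀ * B d) := by rw [hc₀def]; field_simp
    calc E * I ^ e = -(E * c₀) * B d := by rw [hIe]; ring
      _ = -(((1/β : ℝ)):ℂ) * B d := by rw [hEc]
  -- coefficient constants
  obtain ⟨Ca, hCadef⟩ : ∃ x : ℝ, x = ∑ k ∈ range n, ‖A k‖ := ⟨_, rfl⟩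
  obtain ⟨Cb, hCbdef⟩ : ∃ x : ℝ, x = ∑ k ∈ range d, ‖B k‖ := ⟨_, rfl⟩
  obtain ⟨Cp, hCpdef⟩ : ∃ x : ℝ, x = ∑ k ∈ range (n+1), (k:ℝ) * ‖A k‖ := ⟨_, rfl⟩
  obtain ⟨Cq, hCqdef⟩ : ∃ x : ℝ, x = ∑ k ∈ range (d+1), (k:ℝ) * ‖B k‖ := ⟨_, rfl⟩
  have hCa : 0 ≤ Ca := by rw [hCadef]; exact Finset.sum_nonneg fun _ _ => norm_nonneg _
  have hCb : 0 ≤ Cb := by rw [hCbdef]; exact Finset.sum_nonneg fun _ _ => norm_nonneg _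
  have hCp : 0 ≤ Cp := by rw [hCpdef]; exact Finset.sum_nonneg fun k _ => by positivity
  have hCq : 0 ≤ Cq := by rw [hCqdef]; exact Finset.sum_nonneg fun k _ => by positivity
  obtain ⟨CA, hCAdef⟩ : ∃ x : ℝ, x = Ca * 2^(n+1) := ⟨_, rfl⟩
  obtain ⟨CB, hCBdef⟩ : ∃ x : ℝ, x = Cb * 2^(d+1) := ⟨_, rfl⟩
  obtain ⟨CP, hCPdef⟩ : ∃ x : ℝ, x = Cp * 2^(n+1) := ⟨_, rfl⟩
  obtain ⟨CQ, hCQdef⟩ : ∃ x : ℝ, x = Cq * 2^(d+1) := ⟨_, rfl⟩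
  have hCA : 0 ≤ CA := by rw [hCAdef]; exact mul_nonneg hCa (by positivity)
  have hCB : 0 ≤ CB := by rw [hCBdef]; exact mul_nonneg hCb (by positivity)
  have hCP : 0 ≤ CP := by rw [hCPdef]; exact mul_nonneg hCp (by positivity)
  have hCQ : 0 ≤ CQ := by rw [hCQdef]; exact mul_nonneg hCq (by positivity)
  obtain ⟨Qlb, hQlbdef⟩ : ∃ x : ℝ, x = β / 2^(d+1) := ⟨_, rfl⟩
  obtain ⟨Qub, hQubdef⟩ : ∃ x : ℝ, x = β * 2^d + CB := ⟨_, rfl⟩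
  obtain ⟨Pub, hPubdef⟩ : ∃ x : ℝ, x = 2^n + CA := ⟨_, rfl⟩
  obtain ⟨C1, hC1def⟩ : ∃ x : ℝ, x = CP * Qub + Pub * CQ := ⟨_, rfl⟩
  have hQlb0 : 0 < Qlb := by rw [hQlbdef]; exact div_pos hβ (by positivity)
  have hQub0 : 0 < Qub := by
    rw [hQubdef]
    have := mul_pos hβ (pow_pos (by norm_num : (0:ℝ) < 2) d)
    linarith
  have hPub0 : 0 < Pub := by
    rw [hPubdef]
    have : (0:ℝ) < 2^n := by positivity
    linarith
  have hC10 : 0 ≤ C1 := by rw [hC1def]; exact add_nonneg (mul_nonneg hCP hQub0.le) (mul_nonneg hPub0.le hCQ)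
  obtain ⟨δ, hδdef⟩ : ∃ x : ℝ, x = 1 / ((n:ℝ) * 2^n * 2^(d+4) + 1) := ⟨_, rfl⟩
  have hδ0 : 0 < δ := by rw [hδdef]; positivity
  have hn1 : (1:ℝ) ≤ (n:ℝ) := by exact_mod_cast hn
  have hδhalf : δ ≤ 1/2 := by
    have h2 : (1:ℝ) ≤ 2^n := one_le_pow₀ one_le_two
    have h3 : (1:ℝ) ≤ 2^(d+4) := one_le_pow₀ one_le_two
    have h12 : (1:ℝ) ≤ (n:ℝ)*2^n :=
      le_trans hn1 (le_mul_of_one_le_right (by positivity) h2)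
    have h123 : (1:ℝ) ≤ (n:ℝ)*2^n*2^(d+4) :=
      le_trans h12 (le_mul_of_one_le_right (by positivity) h3)
    rw [hδdef]
    have := one_div_le_one_div_of_le (by norm_num : (0:ℝ) < 2) (by linarith : (2:ℝ) ≤ (n:ℝ)*2^n*2^(d+4)+1)
    linarith
  obtain ⟨CL, hCLdef⟩ : ∃ x : ℝ, x = |Real.log β| + Real.log 2 + Real.pi + |θ| + 1 := ⟨_, rfl⟩
  have hCL : 1 ≤ CL := by
    have := Real.log_pos one_lt_two
    have := Real.pi_pos
    have := abs_nonneg (Real.log β)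
    have := abs_nonneg θ
    rw [hCLdef]; linarith
  -- eventual conditions
  have hev : ∀ᶠ t : ℝ in atTop, (2 ≤ t ∧ CB * 2^(d+1) ≤ β*t ∧ (CA + CB/β)*2^(d+4) ≤ t
      ∧ ((n:ℝ)*Real.log t + CL)/τ ≤ δ*t ∧ 4*β*C1 ≤ τ*t*Qlb^2) := by
    have h1 : ∀ᶠ t : ℝ in atTop, (2:ℝ) ≤ t := eventually_ge_atTop 2
    have h2 : ∀ᶠ t : ℝ in atTop, CB*2^(d+1)/β ≤ t := eventually_ge_atTop _
    have h3 : ∀ᶠ t : ℝ in atTop, (CA + CB/β)*2^(d+4) ≤ t := eventually_ge_atTop _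
    have h5 : ∀ᶠ t : ℝ in atTop, 4*β*C1/(τ*Qlb^2) ≤ t := eventually_ge_atTop _
    have hδ' : (0:ℝ) < τ*δ/(2*((n:ℝ)+1)) := by positivity
    have h4a := Real.isLittleO_log_id_atTop.bound hδ'
    have h4b : ∀ᶠ t : ℝ in atTop, 2*CL/(τ*δ) ≤ t := eventually_ge_atTop _
    filter_upwards [h1, h2, h3, h5, h4a, h4b] with t ht1 ht2 ht3 ht5 ht4a ht4b
    have ht0 : (0:ℝ) < t := by linarith
    refine ⟨ht1, ?_, ht3, ?_, ?_⟩
    · have := (div_le_iff₀ hβ).1 ht2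
      linarith
    · have hl : Real.log t ≤ τ*δ/(2*((n:ℝ)+1))*t := by
        have h' := ht4a
        simp only [id_eq, Real.norm_eq_abs] at h'
        calc Real.log t ≤ |Real.log t| := le_abs_self _
          _ ≤ τ*δ/(2*((n:ℝ)+1))*|t| := h'
          _ = τ*δ/(2*((n:ℝ)+1))*t := by rw [abs_of_pos ht0]
      have hcoef : (n:ℝ)*(τ*δ/(2*((n:ℝ)+1))) ≤ τ*δ/2 := by
        have h0 : (n:ℝ)/((n:ℝ)+1) ≤ 1 := by
          rw [div_le_one (by positivity)]; linarith
        calc (n:ℝ)*(τ*δ/(2*((n:ℝ)+1))) = ((n:ℝ)/((n:ℝ)+1))*(τ*δ/2) := by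
              field_simp
          _ ≤ 1*(τ*δ/2) := mul_le_mul_of_nonneg_right h0 (by positivity)
          _ = τ*δ/2 := one_mul _
      have hnl : (n:ℝ)*Real.log t ≤ τ*δ/2*t := by
        calc (n:ℝ)*Real.log t ≤ (n:ℝ)*(τ*δ/(2*((n:ℝ)+1))*t) :=
              mul_le_mul_of_nonneg_left hl (Nat.cast_nonneg n)
          _ = ((n:ℝ)*(τ*δ/(2*((n:ℝ)+1))))*t := by ring
          _ ≤ (τ*δ/2)*t := mul_le_mul_of_nonneg_right hcoef ht0.le
      have hCL' : 2*CL ≤ t*(τ*δ) := (div_le_iff₀ (by positivity : (0:ℝ) < τ*δ)).1 ht4b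
      rw [div_le_iff₀ hτ]
      linarith [hnl, hCL']
    · have h6 := (div_le_iff₀ (by positivity : (0:ℝ) < τ*Qlb^2)).1 ht5
      linarith [h6]
  rw [eventually_atTop] at hev
  obtain ⟨T, hT⟩ := hev
  refine ⟨T, fun t ht => ?_⟩
  obtain ⟨ht1, ht2, ht3, ht4, ht5⟩ := hT t ht
  have ht0 : (0:ℝ) < t := by linarith
  have htone : (1:ℝ) ≤ t := by linarith
  have htne : t ≠ 0 := by linarith
  have hβne : β ≠ 0 := hβ.ne'
  have hτne : τ ≠ 0 := hτ.ne'
  obtain ⟨W, hWdef⟩ : ∃ x : ℝ, x = t^e/β := ⟨_, rfl⟩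
  have hW0 : 0 < W := by rw [hWdef]; exact div_pos (pow_pos ht0 e) hβ
  obtain ⟨ρ, hρdef⟩ : ∃ x : ℝ, x = ((n:ℝ)*Real.log t + CL)/τ := ⟨_, rfl⟩
  have hlogt : 0 ≤ Real.log t := Real.log_nonneg htone
  have hρ0 : 0 ≤ ρ := by
    rw [hρdef]
    have h1 : 0 ≤ (n:ℝ)*Real.log t := mul_nonneg (Nat.cast_nonneg n) hlogt
    exact div_nonneg (by linarith) hτ.le
  have hδt2 : δ*t ≤ t/2 := by
    calc δ*t ≤ (1/2)*t := mul_le_mul_of_nonneg_right hδhalf ht0.le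
      _ = t/2 := by ring
  obtain ⟨ζ, hζdef⟩ : ∃ x : ℂ, x = I*(t:ℂ) := ⟨_, rfl⟩
  have hζn : ‖ζ‖ = t := by
    rw [hζdef, norm_mul, Complex.norm_I, one_mul, Complex.norm_real, Real.norm_eq_abs,
      abs_of_pos ht0]
  obtain ⟨P, hPdef⟩ : ∃ x : ℂ → ℂ, x = qpoly A n := ⟨_, rfl⟩
  obtain ⟨Q, hQdef⟩ : ∃ x : ℂ → ℂ, x = qpoly B d := ⟨_, rfl⟩
  obtain ⟨w, hwdef⟩ : ∃ x : ℂ → ℂ, x = fun z => E * (-(P z)) / Q z := ⟨_, rfl⟩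
  -- ball facts
  have hBall : ∀ s : ℂ, ‖s - ζ‖ ≤ δ*t → 1 ≤ ‖s‖ ∧ t/2 ≤ ‖s‖ ∧ ‖s‖ ≤ 2*t := by
    intro s hs
    have h := abs_norm_sub_norm_le s ζ
    rw [hζn] at h
    have h1 := abs_le.1 h
    constructor
    · linarith
    constructor
    · linarith
    · linarith
  have hF1 : ∀ s : ℂ, ‖s - ζ‖ ≤ δ*t → ‖P s - s^n‖ * t ≤ CA * t^n := by
    intro s hs
    obtain ⟨h1, h2, h3⟩ := hBall s hs
    have htail := qpoly_tail A n s h1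
    rw [hA, one_mul, ← hCadef, ← hPdef] at htail
    have hsn : ‖s‖^n ≤ 2^n * t^n := by rw [← mul_pow]; exact pow_le_pow_left₀ (norm_nonneg s) h3 n
    have hX : (0:ℝ) ≤ ‖P s - s^n‖ := norm_nonneg _
    calc ‖P s - s^n‖ * t ≤ ‖P s - s^n‖ * (2*‖s‖) := by
          apply mul_le_mul_of_nonneg_left (by linarith) hX
      _ = 2*(‖P s - s^n‖*‖s‖) := by ring
      _ ≤ 2*(Ca * ‖s‖^n) := by linarith
      _ ≤ 2*(Ca * (2^n * t^n)) := by
          have := mul_le_mul_of_nonneg_left hsn hCa; linarith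
      _ = CA * t^n := by rw [hCAdef]; ring
  have hF2 : ∀ s : ℂ, ‖s - ζ‖ ≤ δ*t → ‖Q s - B d * s^d‖ * t ≤ CB * t^d := by
    intro s hs
    obtain ⟨h1, h2, h3⟩ := hBall s hs
    have htail := qpoly_tail B d s h1
    rw [← hCbdef, ← hQdef] at htail
    have hsd : ‖s‖^d ≤ 2^d * t^d := by rw [← mul_pow]; exact pow_le_pow_left₀ (norm_nonneg s) h3 d
    have hX : (0:ℝ) ≤ ‖Q s - B d * s^d‖ := norm_nonneg _
    calc ‖Q s - B d * s^d‖ * t ≤ ‖Q s - B d * s^d‖ * (2*‖s‖) := by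
          apply mul_le_mul_of_nonneg_left (by linarith) hX
      _ = 2*(‖Q s - B d * s^d‖*‖s‖) := by ring
      _ ≤ 2*(Cb * ‖s‖^d) := by linarith
      _ ≤ 2*(Cb * (2^d * t^d)) := by
          have := mul_le_mul_of_nonneg_left hsd hCb; linarith
      _ = CB * t^d := by rw [hCBdef]; ring
  have hQlbs : ∀ s : ℂ, ‖s - ζ‖ ≤ δ*t → Qlb * t^d ≤ ‖Q s‖ := by
    intro s hs
    obtain ⟨h1, h2, h3⟩ := hBall s hs
    have hf2 := hF2 s hs
    have htr : ‖B d * s^d‖ - ‖Q s‖ ≤ ‖Q s - B d * s^d‖ := by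
      have h := abs_norm_sub_norm_le (Q s) (B d*s^d)
      have := (abs_le.1 h).1
      linarith
    have hlow : β*(t/2)^d ≤ ‖B d * s^d‖ := by
      rw [norm_mul, norm_pow, hβdef]
      exact mul_le_mul_of_nonneg_left (pow_le_pow_left₀ (by positivity) h2 d) (norm_nonneg _)
    have e1 : ‖Q s - B d*s^d‖ ≤ (β/2^(d+1)) * t^d := by
      have h5 : ‖Q s - B d*s^d‖ ≤ CB * t^d / t := by
        rw [le_div_iff₀ ht0]; exact hf2
      have h7 : CB ≤ β*t/2^(d+1) := by
        rw [le_div_iff₀ (by positivity : (0:ℝ) < 2^(d+1))]; linarith [ht2]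
      have h6 : CB * t^d / t ≤ (β/2^(d+1)) * t^d := by
        rw [div_le_iff₀ ht0]
        calc CB * t^d ≤ (β*t/2^(d+1)) * t^d := mul_le_mul_of_nonneg_right h7 (by positivity)
          _ = (β/2^(d+1))*t^d*t := by ring
      linarith
    have e2 : β*(t/2)^d = (β/2^d) * t^d := by rw [div_pow]; ring
    have e3 : (β/2^d)*t^d = 2*((β/2^(d+1))*t^d) := by ring
    rw [hQlbdef]
    linarith [htr, hlow, e1, e2, e3]
  have hQne : ∀ s : ℂ, ‖s - ζ‖ ≤ δ*t → Q s ≠ 0 := by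
    intro s hs
    have := hQlbs s hs
    have h0 : (0:ℝ) < Qlb * t^d := by positivity
    intro hQ0
    rw [hQ0, norm_zero] at this
    linarith
  have hQubs : ∀ s : ℂ, ‖s - ζ‖ ≤ δ*t → ‖Q s‖ ≤ Qub * t^d := by
    intro s hs
    obtain ⟨h1, h2, h3⟩ := hBall s hs
    have hf2 := hF2 s hs
    have htr : ‖Q s‖ - ‖B d * s^d‖ ≤ ‖Q s - B d * s^d‖ := by
      have h := abs_norm_sub_norm_le (Q s) (B d*s^d)
      have := (abs_le.1 h).1
      linarith [(abs_le.1 h).2]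
    have hsd : ‖s‖^d ≤ 2^d * t^d := by rw [← mul_pow]; exact pow_le_pow_left₀ (norm_nonneg s) h3 d
    have hup : ‖B d * s^d‖ ≤ β * (2^d * t^d) := by
      rw [norm_mul, norm_pow, hβdef]
      exact mul_le_mul_of_nonneg_left hsd (norm_nonneg _)
    have h5 : ‖Q s - B d*s^d‖ ≤ CB * t^d := by
      have h5' : ‖Q s - B d*s^d‖ * 1 ≤ ‖Q s - B d*s^d‖ * t :=
        mul_le_mul_of_nonneg_left htone (norm_nonneg _)
      linarith [hf2, h5']
    rw [hQubdef]
    linarith [htr, hup, h5]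
  have hPubs : ∀ s : ℂ, ‖s - ζ‖ ≤ δ*t → ‖P s‖ ≤ Pub * t^n := by
    intro s hs
    obtain ⟨h1, h2, h3⟩ := hBall s hs
    have hf1 := hF1 s hs
    have htr : ‖P s‖ - ‖(s:ℂ)^n‖ ≤ ‖P s - s^n‖ := by
      have h := abs_norm_sub_norm_le (P s) (s^n)
      linarith [(abs_le.1 h).2]
    have hsn : ‖s‖^n ≤ 2^n * t^n := by rw [← mul_pow]; exact pow_le_pow_left₀ (norm_nonneg s) h3 n
    have h5 : ‖P s - s^n‖ ≤ CA * t^n := by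
      have h5' : ‖P s - s^n‖ * 1 ≤ ‖P s - s^n‖ * t :=
        mul_le_mul_of_nonneg_left htone (norm_nonneg _)
      linarith [hf1, h5']
    rw [hPubdef]
    have hsn' : ‖(s:ℂ)^n‖ = ‖s‖^n := norm_pow _ _
    linarith [htr, hsn, h5]
  have hF6P : ∀ s : ℂ, ‖s - ζ‖ ≤ δ*t → ‖qdpoly A n s‖ * t ≤ CP * t^n := by
    intro s hs
    obtain ⟨h1, h2, h3⟩ := hBall s hs
    have htail := qdpoly_bound A n s h1
    rw [← hCpdef] at htail
    have hsn : ‖s‖^n ≤ 2^n * t^n := by rw [← mul_pow]; exact pow_le_pow_left₀ (norm_nonneg s) h3 n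
    have hX : (0:ℝ) ≤ ‖qdpoly A n s‖ := norm_nonneg _
    calc ‖qdpoly A n s‖ * t ≤ ‖qdpoly A n s‖ * (2*‖s‖) := by
          apply mul_le_mul_of_nonneg_left (by linarith) hX
      _ = 2*(‖qdpoly A n s‖*‖s‖) := by ring
      _ ≤ 2*(Cp * ‖s‖^n) := by linarith
      _ ≤ 2*(Cp * (2^n * t^n)) := by
          have := mul_le_mul_of_nonneg_left hsn hCp; linarith
      _ = CP * t^n := by rw [hCPdef]; ring
  have hF6Q : ∀ s : ℂ, ‖s - ζ‖ ≤ δ*t → ‖qdpoly B d s‖ * t ≤ CQ * t^d := by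
    intro s hs
    obtain ⟨h1, h2, h3⟩ := hBall s hs
    have htail := qdpoly_bound B d s h1
    rw [← hCqdef] at htail
    have hsd : ‖s‖^d ≤ 2^d * t^d := by rw [← mul_pow]; exact pow_le_pow_left₀ (norm_nonneg s) h3 d
    have hX : (0:ℝ) ≤ ‖qdpoly B d s‖ := norm_nonneg _
    calc ‖qdpoly B d s‖ * t ≤ ‖qdpoly B d s‖ * (2*‖s‖) := by
          apply mul_le_mul_of_nonneg_left (by linarith) hX
      _ = 2*(‖qdpoly B d s‖*‖s‖) := by ring
      _ ≤ 2*(Cq * ‖s‖^d) := by linarith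
      _ ≤ 2*(Cq * (2^d * t^d)) := by
          have := mul_le_mul_of_nonneg_left hsd hCq; linarith
      _ = CQ * t^d := by rw [hCQdef]; ring
  have hten : (t:ℝ)^e * t^d = t^n := by rw [← pow_add, hed]
  have hWest : ∀ s : ℂ, ‖s - ζ‖ ≤ δ*t → ‖w s - ((W:ℝ):ℂ)‖ ≤ W/2 := by
    intro s hs
    obtain ⟨h1, h2, h3⟩ := hBall s hs
    have hQs := hQne s hs
    have heq : w s - ((W:ℝ):ℂ) = (E * (-(P s)) - ((W:ℝ):ℂ) * Q s)/Q s := by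
      rw [hwdef]
      field_simp
    have hkey : E * ζ^e = -(((W:ℝ):ℂ) * B d) := by
      have hζe : ζ^e = I^e * (t:ℂ)^e := by rw [hζdef, mul_pow]
      have hWc : ((W:ℝ):ℂ) = ((1/β:ℝ):ℂ) * (t:ℂ)^e := by
        rw [hWdef]; push_cast; ring
      rw [hζe, ← mul_assoc, hEI, hWc]; ring
    have hsed : (s:ℂ)^e * s^d = s^n := by rw [← pow_add, hed]
    have hsplit : E * (-(P s)) - ((W:ℝ):ℂ) * Q s
        = E * (s^n - P s) + (E * (-(s^d)) * (s^e - ζ^e)) + ((W:ℝ):ℂ) * (B d * s^d - Q s) := by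
      linear_combination E * hsed + (-(s^(d:ℕ))) * hkey
    have hN1 : ‖E * (s^n - P s)‖ ≤ CA * t^n / t := by
      rw [norm_mul, hEnorm, one_mul, norm_sub_rev, le_div_iff₀ ht0]
      exact hF1 s hs
    have hN3 : ‖((W:ℝ):ℂ) * (B d * s^d - Q s)‖ ≤ W * (CB * t^d / t) := by
      rw [norm_mul, Complex.norm_real, Real.norm_eq_abs, abs_of_pos hW0, norm_sub_rev]
      apply mul_le_mul_of_nonneg_left _ hW0.le
      rw [le_div_iff₀ ht0]; exact hF2 s hs
    have hζ2t : ‖ζ‖ ≤ 2*t := by rw [hζn]; linarith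
    have hN2 : ‖E * (-(s^d)) * (s^e - ζ^e)‖ ≤ (2*t)^d * ((e:ℝ) * (2*t)^(e-1) * (δ*t)) := by
      rw [norm_mul, norm_mul, hEnorm, one_mul, norm_neg, norm_pow]
      have hsd : ‖s‖^d ≤ (2*t)^d := pow_le_pow_left₀ (norm_nonneg _) h3 d
      have h4 : ‖s^e - ζ^e‖ ≤ (e:ℝ)*(2*t)^(e-1)*(δ*t) := by
        calc ‖s^e - ζ^e‖ ≤ (e:ℝ)*(2*t)^(e-1)*‖s - ζ‖ := pow_sub_pow_bound s ζ e (2*t) h3 hζ2t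
          _ ≤ (e:ℝ)*(2*t)^(e-1)*(δ*t) := by
              apply mul_le_mul_of_nonneg_left hs (by positivity)
      exact mul_le_mul hsd h4 (norm_nonneg _) (by positivity)
    have hN2' : (2*t)^d * ((e:ℝ) * (2*t)^(e-1) * (δ*t)) ≤ (1/2^(d+4)) * t^n := by
      rcases Nat.eq_zero_or_pos e with he0 | he1
      · rw [he0]
        simp only [Nat.cast_zero, zero_mul, mul_zero]
        positivity
      · have h2t : (2*t)^(e-1)*t = (1/2)*(2*t)^e := by
          have hh : (2*t)^e = (2*t)^(e-1)*(2*t) := by rw [← pow_succ]; congr 1; omega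
          rw [hh]; ring
        have hde : (2*t)^d*(2*t)^e = 2^n * t^n := by
          rw [← pow_add, (show d+e = n by omega), mul_pow]
        have hLHSeq : (2*t)^d * ((e:ℝ)*(2*t)^(e-1)*(δ*t)) = (e:ℝ)*δ*(1/2)*(2^n*t^n) := by
          calc (2*t)^d * ((e:ℝ)*(2*t)^(e-1)*(δ*t))
              = (e:ℝ)*δ*((2*t)^d*((2*t)^(e-1)*t)) := by ring
            _ = (e:ℝ)*δ*((2*t)^d*((1/2)*(2*t)^e)) := by rw [h2t]
            _ = (e:ℝ)*δ*(1/2)*((2*t)^d*(2*t)^e) := by ring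
            _ = (e:ℝ)*δ*(1/2)*(2^n*t^n) := by rw [hde]
        have hδval : δ*((n:ℝ)*2^n*2^(d+4)+1) = 1 := by
          rw [hδdef]; field_simp
        have hkey2 : (n:ℝ)*2^n*δ*2^(d+4) ≤ 1 := by
          have hre : (n:ℝ)*2^n*δ*2^(d+4) = δ*((n:ℝ)*2^n*2^(d+4)) := by ring
          rw [hre]
          have h2 : δ*((n:ℝ)*2^n*2^(d+4)) ≤ δ*((n:ℝ)*2^n*2^(d+4)+1) :=
            mul_le_mul_of_nonneg_left (by linarith) hδ0.le
          rw [hδval] at h2; exact h2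
        have hkey3 : (n:ℝ)*2^n*δ ≤ 1/2^(d+4) := by
          rw [le_div_iff₀ (by positivity : (0:ℝ) < 2^(d+4))]
          exact hkey2
        have hen : (e:ℝ)*(2^n*δ) ≤ (n:ℝ)*(2^n*δ) := by
          apply mul_le_mul_of_nonneg_right _ (by positivity)
          exact_mod_cast (show e ≤ n by omega)
        rw [hLHSeq]
        calc (e:ℝ)*δ*(1/2)*(2^n*t^n) = ((e:ℝ)*(2^n*δ))*(t^n/2) := by ring
          _ ≤ ((n:ℝ)*(2^n*δ))*(t^n/2) := mul_le_mul_of_nonneg_right hen (by positivity)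
          _ = ((n:ℝ)*2^n*δ)*(t^n/2) := by ring
          _ ≤ (1/2^(d+4))*(t^n/2) := mul_le_mul_of_nonneg_right hkey3 (by positivity)
          _ ≤ (1/2^(d+4))*t^n := by
              apply mul_le_mul_of_nonneg_left (half_le_self (by positivity)) (by positivity)
    have h31 : CA + CB/β ≤ t/2^(d+4) := (le_div_iff₀ (by positivity : (0:ℝ) < 2^(d+4))).2 ht3
    have h32 : W*(CB*t^d/t) = (CB/β)*(t^n/t) := by
      rw [hWdef, ← hten]; field_simp
    have h33 : CA*t^n/t + W*(CB*t^d/t) ≤ (1/2^(d+4))*t^n := by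
      rw [h32]
      have hre : CA*t^n/t + (CB/β)*(t^n/t) = (CA + CB/β)*(t^n/t) := by ring
      rw [hre]
      calc (CA + CB/β)*(t^n/t) ≤ (t/2^(d+4))*(t^n/t) :=
            mul_le_mul_of_nonneg_right h31 (by positivity)
        _ = (1/2^(d+4))*t^n := by field_simp
    have hQlo := hQlbs s hs
    have hQpos : (0:ℝ) < ‖Q s‖ := lt_of_lt_of_le (by positivity) hQlo
    rw [heq, norm_div, div_le_iff₀ hQpos]
    have htri : ‖E*(-(P s)) - ((W:ℝ):ℂ)*Q s‖
        ≤ ‖E*(s^n - P s)‖ + ‖E*(-(s^d))*(s^e - ζ^e)‖ + ‖((W:ℝ):ℂ)*(B d*s^d - Q s)‖ := by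
      rw [hsplit]; exact norm_add₃_le
    have hWQ : W/2*(Qlb*t^d) = (1/2^(d+2))*t^n := by
      rw [hWdef, hQlbdef, ← hten]; field_simp; ring
    have h48 : (1/2^(d+4))*t^n + (1/2^(d+4))*t^n + (1/2^(d+4))*t^n ≤ (1/2^(d+2))*t^n := by
      have hp : (2:ℝ)^(d+4) = 2^(d+2)*4 := by
        rw [pow_add, pow_add]; ring
      have hq : (1/2^(d+2):ℝ)*t^n = 4*((1/2^(d+4))*t^n) := by
        rw [hp]; field_simp
      have hr : (0:ℝ) ≤ (1/2^(d+4))*t^n := by positivity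
      linarith
    have hlast : W/2*(Qlb*t^d) ≤ W/2*‖Q s‖ :=
      mul_le_mul_of_nonneg_left hQlo (by positivity)
    have hc4 : (0:ℝ) ≤ (1/2^(d+4))*t^n := by positivity
    linarith [htri, hN1, hN2, hN2', hN3, h33, h48, hWQ, hlast, hc4]
  have hwlb : ∀ s : ℂ, ‖s - ζ‖ ≤ δ*t → W/2 ≤ ‖w s‖ ∧ ‖w s‖ ≤ 2*W := by
    intro s hs
    have h := hWest s hs
    have h1 : ‖((W:ℝ):ℂ)‖ = W := by
      rw [Complex.norm_real, Real.norm_eq_abs, abs_of_pos hW0]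
    have h2 := abs_norm_sub_norm_le (w s) ((W:ℝ):ℂ)
    rw [h1] at h2
    have h3 := abs_le.1 h2
    constructor <;> linarith
  have hwne : ∀ s : ℂ, ‖s - ζ‖ ≤ δ*t → w s ≠ 0 := by
    intro s hs h0
    have := (hwlb s hs).1
    rw [h0, norm_zero] at this
    linarith
  have hslit : ∀ s : ℂ, ‖s - ζ‖ ≤ δ*t → w s ∈ Complex.slitPlane := by
    intro s hs
    rw [Complex.mem_slitPlane_iff]
    left
    have h := hWest s hs
    have hre : |(w s - ((W:ℝ):ℂ)).re| ≤ W/2 := by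
      calc |(w s - ((W:ℝ):ℂ)).re| ≤ ‖w s - ((W:ℝ):ℂ)‖ := by
            exact Complex.abs_re_le_norm _
        _ ≤ W/2 := h
    have h2 : (w s - ((W:ℝ):ℂ)).re = (w s).re - W := by
      rw [Complex.sub_re, Complex.ofReal_re]
    have h3 := (abs_le.1 hre).1
    rw [h2] at h3
    linarith
  have hlogb : ∀ s : ℂ, ‖s - ζ‖ ≤ δ*t →
      ‖Complex.log (w s)‖ ≤ (n:ℝ)*Real.log t + |Real.log β| + Real.log 2 + Real.pi := by
    intro s hs
    obtain ⟨hwl, hwu⟩ := hwlb s hs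
    have h1 : ‖Complex.log (w s)‖ ≤ |(Complex.log (w s)).re| + |(Complex.log (w s)).im| := by
      exact Complex.norm_le_abs_re_add_abs_im _
    rw [Complex.log_re, Complex.log_im] at h1
    have harg : |(w s).arg| ≤ Real.pi := Complex.abs_arg_le_pi _
    have habs : ‖w s‖ = ‖w s‖ := rfl
    have hlo : Real.log (W/2) ≤ Real.log (‖w s‖) := by
      apply Real.log_le_log (by positivity)
      rw [habs]; exact hwl
    have hhi : Real.log (‖w s‖) ≤ Real.log (2*W) := by
      apply Real.log_le_log (by rw [habs]; linarith)
      rw [habs]; exact hwu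
    have hWlog : Real.log W = (e:ℝ)*Real.log t - Real.log β := by
      rw [hWdef, Real.log_div (by positivity) hβ.ne', Real.log_pow]
    have hlo2 : Real.log (W/2) = Real.log W - Real.log 2 := Real.log_div hW0.ne' two_ne_zero
    have hhi2 : Real.log (2*W) = Real.log 2 + Real.log W := Real.log_mul two_ne_zero hW0.ne'
    have habs2 : |Real.log (‖w s‖)| ≤ |Real.log W| + Real.log 2 := by
      rw [abs_le]
      constructor
      · linarith [neg_abs_le (Real.log W)]
      · linarith [le_abs_self (Real.log W)]
    have hWabs : |Real.log W| ≤ (n:ℝ)*Real.log t + |Real.log β| := by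
      rw [hWlog]
      have he1 : (e:ℝ)*Real.log t ≤ (n:ℝ)*Real.log t := by
        apply mul_le_mul_of_nonneg_right _ hlogt
        exact_mod_cast (show e ≤ n by omega)
      have he2 : (0:ℝ) ≤ (e:ℝ)*Real.log t := by positivity
      rw [abs_le]
      constructor
      · linarith [le_abs_self (Real.log β)]
      · linarith [neg_abs_le (Real.log β)]
    linarith [h1, harg, habs2, hWabs]
  -- the contraction map
  obtain ⟨Φ, hΦdef⟩ : ∃ x : ℂ → ℂ, x = fun u => -(τ:ℂ)⁻¹ * (Complex.log (w (ζ+u)) + (θ:ℂ)*I) := ⟨_, rfl⟩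
  have hρδ : ρ ≤ δ*t := by rw [hρdef]; exact ht4
  have hball_of_mem : ∀ u : ℂ, u ∈ Metric.closedBall (0:ℂ) ρ → ‖(ζ+u) - ζ‖ ≤ δ*t := by
    intro u hu
    rw [Metric.mem_closedBall, dist_zero_right] at hu
    have : ζ + u - ζ = u := by ring
    rw [this]; linarith
  have hmaps : Set.MapsTo Φ (Metric.closedBall (0:ℂ) ρ) (Metric.closedBall (0:ℂ) ρ) := by
    intro u hu
    have hball := hball_of_mem u hu
    rw [Metric.mem_closedBall, dist_zero_right]
    have hlg := hlogb (ζ+u) hball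
    have hΦval : Φ u = -(τ:ℂ)⁻¹ * (Complex.log (w (ζ+u)) + (θ:ℂ)*I) := by rw [hΦdef]
    rw [hΦval]
    have hnorm : ‖-(τ:ℂ)⁻¹ * (Complex.log (w (ζ+u)) + (θ:ℂ)*I)‖
        = (1/τ)*‖Complex.log (w (ζ+u)) + (θ:ℂ)*I‖ := by
      rw [norm_mul, norm_neg, norm_inv, Complex.norm_real, Real.norm_eq_abs, abs_of_pos hτ,
        one_div]
    rw [hnorm]
    have htr : ‖Complex.log (w (ζ+u)) + (θ:ℂ)*I‖ ≤ ‖Complex.log (w (ζ+u))‖ + |θ| := by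
      calc ‖Complex.log (w (ζ+u)) + (θ:ℂ)*I‖
          ≤ ‖Complex.log (w (ζ+u))‖ + ‖(θ:ℂ)*I‖ := norm_add_le _ _
        _ = ‖Complex.log (w (ζ+u))‖ + |θ| := by
            rw [norm_mul, Complex.norm_I, mul_one, Complex.norm_real, Real.norm_eq_abs]
    have hsum : ‖Complex.log (w (ζ+u))‖ + |θ| ≤ (n:ℝ)*Real.log t + CL := by
      rw [hCLdef]; linarith [hlg]
    rw [hρdef]
    calc (1/τ)*‖Complex.log (w (ζ+u)) + (θ:ℂ)*I‖ ≤ (1/τ)*((n:ℝ)*Real.log t + CL) := by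
          apply mul_le_mul_of_nonneg_left _ (by positivity)
          linarith [htr, hsum]
      _ = ((n:ℝ)*Real.log t + CL)/τ := by ring
  set w' : ℂ → ℂ := fun z =>
    (E * (-(qdpoly A n z)) * Q z - E * (-(P z)) * qdpoly B d z)/(Q z)^2 with hw'def
  obtain ⟨DΦ, hDΦdef⟩ : ∃ x : ℂ → ℂ, x = fun u => -(τ:ℂ)⁻¹ * ((w (ζ+u))⁻¹ * (w' (ζ+u) * 1)) := ⟨_, rfl⟩
  have hDer : ∀ u ∈ Metric.closedBall (0:ℂ) ρ, HasDerivAt Φ (DΦ u) u := by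
    intro u hu
    have hball := hball_of_mem u hu
    have hQs := hQne (ζ+u) hball
    have hsl := hslit (ζ+u) hball
    have h1 : HasDerivAt (fun z => E * (-(P z))) (E * (-(qdpoly A n (ζ+u)))) (ζ+u) := by
      rw [hPdef]
      exact (hasDerivAt_qpoly A n (ζ+u)).neg.const_mul E
    have h2 : HasDerivAt Q (qdpoly B d (ζ+u)) (ζ+u) := by
      rw [hQdef]
      exact hasDerivAt_qpoly B d (ζ+u)
    have hwd : HasDerivAt w (w' (ζ+u)) (ζ+u) := by
      rw [hwdef, hw'def]
      exact h1.div h2 hQs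
    have hshift : HasDerivAt (fun v : ℂ => ζ + v) 1 u := by
      simpa using (hasDerivAt_id u).const_add ζ
    have hwc : HasDerivAt (fun v => w (ζ + v)) (w' (ζ+u) * 1) u :=
      HasDerivAt.comp u hwd hshift
    have hlg : HasDerivAt (fun v => Complex.log (w (ζ + v))) ((w (ζ+u))⁻¹ * (w' (ζ+u) * 1)) u :=
      HasDerivAt.comp u (Complex.hasDerivAt_log hsl) hwc
    have hfin := (hlg.add_const ((θ:ℂ)*I)).const_mul (-(τ:ℂ)⁻¹)
    rw [hΦdef, hDΦdef]
    exact hfin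
  have hDbound : ∀ u ∈ Metric.closedBall (0:ℂ) ρ, ‖DΦ u‖ ≤ 1/2 := by
    intro u hu
    have hball := hball_of_mem u hu
    have hQlo := hQlbs (ζ+u) hball
    have hQub := hQubs (ζ+u) hball
    have hPub := hPubs (ζ+u) hball
    have h6P := hF6P (ζ+u) hball
    have h6Q := hF6Q (ζ+u) hball
    obtain ⟨hwl, hwu⟩ := hwlb (ζ+u) hball
    have hQpos : (0:ℝ) < ‖Q (ζ+u)‖ := lt_of_lt_of_le (by positivity) hQlo
    have hnum : ‖E * (-(qdpoly A n (ζ+u))) * Q (ζ+u) - E * (-(P (ζ+u))) * qdpoly B d (ζ+u)‖ * t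
        ≤ C1 * t^(n+d) := by
      have ha : ‖E * (-(qdpoly A n (ζ+u))) * Q (ζ+u)‖ = ‖qdpoly A n (ζ+u)‖ * ‖Q (ζ+u)‖ := by
        rw [norm_mul, norm_mul, hEnorm, one_mul, norm_neg]
      have hb : ‖E * (-(P (ζ+u))) * qdpoly B d (ζ+u)‖ = ‖P (ζ+u)‖ * ‖qdpoly B d (ζ+u)‖ := by
        rw [norm_mul, norm_mul, hEnorm, one_mul, norm_neg]
      have hterm1 : (‖qdpoly A n (ζ+u)‖*t)*‖Q (ζ+u)‖ ≤ (CP*t^n)*(Qub*t^d) :=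
        mul_le_mul h6P hQub (norm_nonneg _) (by positivity)
      have hterm2 : ‖P (ζ+u)‖*(‖qdpoly B d (ζ+u)‖*t) ≤ (Pub*t^n)*(CQ*t^d) :=
        mul_le_mul hPub h6Q (by positivity) (by positivity)
      have hC1eq : (CP*t^n)*(Qub*t^d) + (Pub*t^n)*(CQ*t^d) = C1 * t^(n+d) := by
        rw [hC1def, pow_add]; ring
      calc ‖E * (-(qdpoly A n (ζ+u))) * Q (ζ+u) - E * (-(P (ζ+u))) * qdpoly B d (ζ+u)‖ * t
          ≤ (‖E * (-(qdpoly A n (ζ+u))) * Q (ζ+u)‖ + ‖E * (-(P (ζ+u))) * qdpoly B d (ζ+u)‖)*t :=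
            mul_le_mul_of_nonneg_right (norm_sub_le _ _) ht0.le
        _ = (‖qdpoly A n (ζ+u)‖*t)*‖Q (ζ+u)‖ + ‖P (ζ+u)‖*(‖qdpoly B d (ζ+u)‖*t) := by
            rw [ha, hb]; ring
        _ ≤ (CP*t^n)*(Qub*t^d) + (Pub*t^n)*(CQ*t^d) := add_le_add hterm1 hterm2
        _ = C1 * t^(n+d) := hC1eq
    have hDeq : ‖DΦ u‖ = τ⁻¹ * (‖w (ζ+u)‖⁻¹ *
        (‖E * (-(qdpoly A n (ζ+u))) * Q (ζ+u) - E * (-(P (ζ+u))) * qdpoly B d (ζ+u)‖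
          / ‖Q (ζ+u)‖^2)) := by
      simp only [hDΦdef, hw'def, mul_one]
      rw [norm_mul, norm_neg, norm_inv, norm_mul, norm_inv, norm_div, norm_pow,
        Complex.norm_real, Real.norm_eq_abs, abs_of_pos hτ]
    rw [hDeq]
    have hinv1 : ‖w (ζ+u)‖⁻¹ ≤ (W/2)⁻¹ := by
      apply inv_anti₀ (by positivity) hwl
    have hnum' : ‖E * (-(qdpoly A n (ζ+u))) * Q (ζ+u) - E * (-(P (ζ+u))) * qdpoly B d (ζ+u)‖
        ≤ C1*t^(n+d)/t := (le_div_iff₀ ht0).2 hnum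
    have hden : (Qlb*t^d)^2 ≤ ‖Q (ζ+u)‖^2 := pow_le_pow_left₀ (by positivity) hQlo 2
    have hfrac : ‖E * (-(qdpoly A n (ζ+u))) * Q (ζ+u) - E * (-(P (ζ+u))) * qdpoly B d (ζ+u)‖
          / ‖Q (ζ+u)‖^2 ≤ (C1*t^(n+d)/t)/((Qlb*t^d)^2) := by
      apply div_le_div₀ (by positivity) hnum' (by positivity) hden
    have hpw : (t:ℝ)^(n+d) = t^e*(t^d)^2 := by
      rw [← pow_mul, ← pow_add]; congr 1; omega
    have hEQ : τ⁻¹ * ((W/2)⁻¹ * ((C1*t^(n+d)/t)/((Qlb*t^d)^2))) = (2*β*C1)/(τ*t*Qlb^2) := by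
      rw [hWdef, hpw]; field_simp
    calc τ⁻¹ * (‖w (ζ+u)‖⁻¹ *
        (‖E * (-(qdpoly A n (ζ+u))) * Q (ζ+u) - E * (-(P (ζ+u))) * qdpoly B d (ζ+u)‖
          / ‖Q (ζ+u)‖^2))
        ≤ τ⁻¹ * ((W/2)⁻¹ * ((C1*t^(n+d)/t)/((Qlb*t^d)^2))) := by
          apply mul_le_mul_of_nonneg_left _ (by positivity)
          apply mul_le_mul hinv1 hfrac (by positivity) (by positivity)
      _ = (2*β*C1)/(τ*t*Qlb^2) := hEQ
      _ ≤ 1/2 := by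
          rw [div_le_iff₀ (by positivity : (0:ℝ) < τ*t*Qlb^2)]
          linarith [ht5]
  -- lipschitz via MVT
  have hlip : LipschitzOnWith (1/2 : NNReal) Φ (Metric.closedBall (0:ℂ) ρ) := by
    apply LipschitzOnWith.of_dist_le_mul
    intro x hx y hy
    rw [dist_eq_norm, dist_eq_norm]
    have hmvt := Convex.norm_image_sub_le_of_norm_hasFDerivWithin_le
      (f := Φ) (C := 1/2) (s := Metric.closedBall (0:ℂ) ρ)
      (f' := fun u => ContinuousLinearMap.smulRight (1 : ℂ →L[ℂ] ℂ) (DΦ u))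
      (fun u hu => ((hDer u hu).hasFDerivAt).hasFDerivWithinAt)
      (fun u hu => ?_) (convex_closedBall _ _) hy hx
    · calc ‖Φ x - Φ y‖ ≤ 1/2 * ‖x - y‖ := hmvt
        _ = ((1/2 : NNReal) : ℝ) * ‖x - y‖ := by norm_num
    · rw [ContinuousLinearMap.norm_smulRight_apply, ContinuousLinearMap.one_def, ContinuousLinearMap.norm_id]
      simpa using hDbound u hu
  -- Banach fixed point
  obtain ⟨u₀, hu₀m, hfix⟩ : ∃ u : ℂ, ‖u‖ ≤ ρ ∧ Φ u = u := by
    haveI hne : Nonempty (Metric.closedBall (0:ℂ) ρ) := ⟨⟨0, Metric.mem_closedBall_self hρ0⟩⟩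
    haveI hcs : CompleteSpace (Metric.closedBall (0:ℂ) ρ) :=
      Metric.isClosed_closedBall.completeSpace_coe
    have hFlip : LipschitzWith (1/2 : NNReal) (Set.MapsTo.restrict Φ _ _ hmaps) :=
      LipschitzWith.subtype_mk (lipschitzOnWith_iff_restrict.1 hlip) _
    have hcontr : ContractingWith (1/2 : NNReal) (Set.MapsTo.restrict Φ _ _ hmaps) :=
      ⟨by rw [← NNReal.coe_lt_coe]; norm_num, hFlip⟩
    refine ⟨(ContractingWith.fixedPoint _ hcontr : Metric.closedBall (0:ℂ) ρ), ?_, ?_⟩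
    · have := (ContractingWith.fixedPoint _ hcontr).2
      rwa [Metric.mem_closedBall, dist_zero_right] at this
    · exact congrArg Subtype.val hcontr.fixedPoint_isFixedPt
  -- conclude
  obtain ⟨s₀, hs₀def⟩ : ∃ x : ℂ, x = ζ + u₀ := ⟨_, rfl⟩
  have hs₀ball : ‖s₀ - ζ‖ ≤ δ*t := by
    have h : s₀ - ζ = u₀ := by rw [hs₀def]; ring
    rw [h]; linarith
  refine ⟨s₀, ?_, ?_⟩
  · have h := abs_norm_sub_norm_le s₀ ζ
    rw [hζn] at h
    have := (abs_le.1 h).1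
    linarith
  · have hQs := hQne s₀ hs₀ball
    have hwns := hwne s₀ hs₀ball
    have hu : s₀ - I*(t:ℂ) = (u₀:ℂ) := by rw [hs₀def, hζdef]; ring
    have h1 := hfix
    simp only [hΦdef] at h1
    have hζu : ζ + (u₀:ℂ) = s₀ := hs₀def.symm
    rw [hζu] at h1
    have hτc : (τ:ℂ) ≠ 0 := Complex.ofReal_ne_zero.2 hτne
    have h2 : -(u₀:ℂ)*(τ:ℂ) = Complex.log (w s₀) + (θ:ℂ)*I := by
      rw [← h1]; field_simp
    have h3 : Complex.exp (-(u₀:ℂ)*(τ:ℂ)) = w s₀ * Complex.exp ((θ:ℂ)*I) := by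
      rw [h2, Complex.exp_add, Complex.exp_log hwns]
    have hEθ : E * Complex.exp ((θ:ℂ)*I) = 1 := by
      rw [hEdef, ← Complex.exp_add]
      have hz : -(θ:ℂ)*I + (θ:ℂ)*I = 0 := by ring
      rw [hz, Complex.exp_zero]
    have h4 : Complex.exp (-(u₀:ℂ)*(τ:ℂ)) = -(P s₀)/Q s₀ := by
      rw [h3]
      simp only [hwdef]
      linear_combination ((-(P s₀))/Q s₀) * hEθ
    rw [← hPdef, ← hQdef, hu, h4]
    field_simp
    ring

set_option maxHeartbeats 1000000 in
/-- The quasipolynomial `Δ(s) = s^n + Σ_{k<n} a_k s^k + e^{-sτ} Σ_{k≤m} b_k s^k`,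
with `τ > 0` and not all `b_k` zero, has infinitely many roots in `ℂ`. -/
theorem quasipolynomial_infinitely_many_roots (n m : ℕ) (hn : 1 ≤ n) (hm : m ≤ n)
    (τ : ℝ) (hτ : 0 < τ) (a : Fin n → ℝ) (b : Fin (m + 1) → ℝ)
    (hb : ∃ k, b k ≠ 0) :
    {s : ℂ | s ^ n + (∑ k : Fin n, (a k : ℂ) * s ^ (k : ℕ)) +
      Complex.exp (-s * τ) * (∑ k : Fin (m + 1), (b k : ℂ) * s ^ (k : ℕ)) = 0}.Infinite := by
  classical
  obtain ⟨k₀, hk₀⟩ := hb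
  set A : ℕ → ℂ := fun k => if h : k < n then ((a ⟨k, h⟩ : ℝ) : ℂ) else 1 with hAdef
  set Bf : ℕ → ℂ := fun k => if h : k < m+1 then ((b ⟨k, h⟩ : ℝ) : ℂ) else 0 with hBdef
  have hA : A n = 1 := by rw [hAdef]; simp
  set Fl : Finset ℕ := (Finset.range (m+1)).filter (fun k => Bf k ≠ 0) with hFldef
  have hFlne : Fl.Nonempty := by
    refine ⟨(k₀ : ℕ), ?_⟩
    rw [hFldef, Finset.mem_filter, Finset.mem_range]
    refine ⟨k₀.isLt, ?_⟩
    rw [hBdef]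
    simp only [dif_pos k₀.isLt]
    rw [Fin.eta]
    exact_mod_cast Complex.ofReal_ne_zero.2 hk₀
  set d : ℕ := Fl.max' hFlne with hddef
  have hdmem : d ∈ Fl := Fl.max'_mem hFlne
  rw [hFldef, Finset.mem_filter, Finset.mem_range] at hdmem
  obtain ⟨hdm, hBd⟩ := hdmem
  have hvanish : ∀ j, d < j → Bf j = 0 := by
    intro j hj
    by_cases hjm : j < m+1
    · by_contra hne
      have hmem : j ∈ Fl := by
        rw [hFldef, Finset.mem_filter, Finset.mem_range]; exact ⟨hjm, hne⟩
      have hle : j ≤ d := by rw [hddef]; exact Finset.le_max' Fl j hmem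
      omega
    · rw [hBdef]; simp [hjm]
  have hdn : d ≤ n := by omega
  have hQrep : ∀ s : ℂ, qpoly Bf d s = ∑ k : Fin (m+1), (b k : ℂ) * s^(k:ℕ) := by
    intro s
    rw [qpoly]
    rw [Finset.sum_subset (Finset.range_subset_range.2 (by omega : d+1 ≤ m+1))]
    · rw [← Fin.sum_univ_eq_sum_range (fun k => Bf k * s^k) (m+1)]
      apply Finset.sum_congr rfl
      intro i _
      have hi : (i:ℕ) < m+1 := i.isLt
      rw [hBdef]
      simp only [dif_pos hi]
    · intro x _ hx2
      rw [Finset.mem_range, not_lt] at hx2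
      rw [hvanish x (by omega)]
      ring
  have hPrep : ∀ s : ℂ, qpoly A n s = s^n + ∑ k : Fin n, (a k : ℂ) * s^(k:ℕ) := by
    intro s
    rw [qpoly, Finset.sum_range_succ, hA, one_mul, add_comm]
    congr 1
    rw [← Fin.sum_univ_eq_sum_range (fun k => A k * s^k) n]
    apply Finset.sum_congr rfl
    intro i _
    have hi : (i:ℕ) < n := i.isLt
    rw [hAdef]
    simp only [dif_pos hi]
  obtain ⟨T, hT⟩ := exists_root_shift A Bf n d hn hdn hA hBd τ hτ
  have key : ∀ R : ℝ, ∃ s : ℂ, R < ‖s‖ ∧ s ∈ {s : ℂ | s ^ n + (∑ k : Fin n, (a k : ℂ) * s ^ (k : ℕ)) +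
      Complex.exp (-s * τ) * (∑ k : Fin (m + 1), (b k : ℂ) * s ^ (k : ℕ)) = 0} := by
    intro R
    have h2π : (0:ℝ) < 2*Real.pi := by positivity
    obtain ⟨k, hk⟩ := exists_nat_ge (τ*(max T (2*R+1))/(2*Real.pi))
    set t : ℝ := 2*Real.pi*(k:ℝ)/τ with htdef
    have htM : max T (2*R+1) ≤ t := by
      rw [htdef, le_div_iff₀ hτ]
      have h3 := (div_le_iff₀ h2π).1 hk
      linarith
    have htT : T ≤ t := le_trans (le_max_left _ _) htM
    have htR : 2*R+1 ≤ t := le_trans (le_max_right _ _) htM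
    obtain ⟨s, hsn, hs0⟩ := hT t htT
    refine ⟨s, by linarith, ?_⟩
    rw [Set.mem_setOf_eq]
    have hexp : Complex.exp (-(s - I*(t:ℂ))*(τ:ℂ)) = Complex.exp (-s*(τ:ℂ)) := by
      have h1 : -(s - I*(t:ℂ))*(τ:ℂ) = -s*(τ:ℂ) + I*(t:ℂ)*(τ:ℂ) := by ring
      rw [h1, Complex.exp_add]
      have h2 : I*(t:ℂ)*(τ:ℂ) = ((k:ℤ):ℂ)*(2*(Real.pi:ℂ)*I) := by
        have hτc : (τ:ℂ) ≠ 0 := Complex.ofReal_ne_zero.2 hτ.ne'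
        rw [htdef]; push_cast; field_simp
      rw [h2, Complex.exp_int_mul_two_pi_mul_I, mul_one]
    rw [← hPrep s, ← hQrep s, ← hexp]
    exact hs0
  by_contra hfin
  rw [Set.not_infinite] at hfin
  obtain ⟨C, hC⟩ := (hfin.image (fun s => ‖s‖)).bddAbove
  obtain ⟨s, hsC, hsmem⟩ := key C
  exact absurd (hC (Set.mem_image_of_mem _ hsmem)) (not_le.2 hsC)
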